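/- Let n ≥ 4 be an integer. Let K_{6n} be given a red/blue edge-coloring that is (F_n, K_4)-free and suppose its vertex set is partitioned into three pairwise disjoint red cliques G_1, G_2, G_3 each of order 2n. Let w be a new vertex joined to some vertices of K_{6n} with red/blue colored edges such that the resulting coloring is still (F_n, K_4)-free. Then it is not the case that w has at least 2 blue neighbors in every one of G_1, G_2, and G_3. -/

import Mathlib

open SimpleGraph

/-- The fan graph `Fₙ`: the join of a single vertex (the center, `none`) with `n`
pairwise disjoint edges (`some (i, a)` is matched with `some (i, !a)`). -/
def Fan (n : ℕ) : SimpleGraph (Option (Fin n × Bool)) where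
  Adj u v := u ≠ v ∧ (u = none ∨ v = none ∨ ∃ i a b, u = some (i, a) ∧ v = some (i, b))
  symm := ⟨by
    rintro u v ⟨h1, h2⟩
    exact ⟨h1.symm, by tauto⟩⟩
  loopless := ⟨by rintro u ⟨h1, -⟩; exact h1 rfl⟩

/-- `G` contains a subgraph isomorphic to the fan graph `Fₙ`. -/
def ContainsFan {V : Type*} (G : SimpleGraph V) (n : ℕ) : Prop :=
  ∃ f : Option (Fin n × Bool) ↪ V, ∀ u v, (Fan n).Adj u v → G.Adj (f u) (f v)

/-- `G` contains a subgraph isomorphic to `K₄`. -/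
def ContainsK4 {V : Type*} (G : SimpleGraph V) : Prop :=
  ∃ a b c d : V, G.Adj a b ∧ G.Adj a c ∧ G.Adj a d ∧ G.Adj b c ∧ G.Adj b d ∧ G.Adj c d

/-- Extend a graph on `V` by one extra vertex (`none`) joined to the set `S`. -/
def extendGraph {V : Type*} (G : SimpleGraph V) (S : Set V) : SimpleGraph (Option V) where
  Adj u v :=
    match u, v with
    | some a, some b => G.Adj a b
    | none, some a => a ∈ S
    | some a, none => a ∈ S
    | none, none => False
  symm := ⟨by rintro (_ | a) (_ | b) h <;> first | exact h | exact G.adj_symm h⟩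
  loopless := ⟨by rintro (_ | a) h; exacts [h, G.irrefl h]⟩

lemma fanOfClique {n : ℕ} {V : Type*} [DecidableEq V] (R : SimpleGraph V)
    (T : Finset V) (hT : T.card = 2 * (n - 1)) (hcl : R.IsClique ↑T)
    (u v z : V) (huT : ∀ t ∈ T, R.Adj u t) (hvT : v ∉ T) (hzT : z ∉ T)
    (huv : R.Adj u v) (huz : R.Adj u z) (hvz : R.Adj v z) :
    ContainsFan R n := by
  have huT' : u ∉ T := fun h => R.irrefl (huT u h)
  obtain ⟨g⟩ : Nonempty ((Fin (n - 1) × Bool) ↪ T) := by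
    apply Function.Embedding.nonempty_of_card_le
    simp only [Fintype.card_prod, Fintype.card_fin, Fintype.card_bool, Fintype.card_coe, hT]
    omega
  set f : Option (Fin n × Bool) → V := fun o =>
    match o with
    | none => u
    | some (i, a) => if h : (i : ℕ) < n - 1 then (g (⟨i, h⟩, a) : V) else if a then v else z
    with hf
  have hmem : ∀ p, (g p : V) ∈ T := fun p => (g p).2
  have hnone : f none = u := rfl
  have hlast : ∀ (i : Fin n) (a : Bool), ¬ ((i:ℕ) < n - 1) →
      f (some (i, a)) = if a then v else z := by
    intro i a h1; simp only [hf, dif_neg h1]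
  have hin : ∀ (i : Fin n) (a : Bool) (h1 : (i:ℕ) < n - 1),
      f (some (i, a)) = (g (⟨i, h1⟩, a) : V) := by
    intro i a h1; simp only [hf, dif_pos h1]
  have hnotT : ∀ a : Bool, (if a then v else z) ∉ T := by
    intro a; cases a <;> simpa
  have hune : ∀ a : Bool, u ≠ (if a then v else z) := by
    intro a; cases a <;> simp [huv.ne, huz.ne]
  have hinj : Function.Injective f := by
    rintro (_ | ⟨i, a⟩) (_ | ⟨j, b⟩) h
    · rfl
    · exfalso; rw [hnone] at h
      by_cases h1 : (j:ℕ) < n - 1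
      · rw [hin j b h1] at h; exact huT' (by rw [h]; exact hmem _)
      · rw [hlast j b h1] at h; exact hune b h
    · exfalso; rw [hnone] at h
      by_cases h1 : (i:ℕ) < n - 1
      · rw [hin i a h1] at h; exact huT' (by rw [← h]; exact hmem _)
      · rw [hlast i a h1] at h; exact hune a h.symm
    · by_cases h1 : (i:ℕ) < n - 1 <;> by_cases h2 : (j:ℕ) < n - 1
      · rw [hin i a h1, hin j b h2] at h
        have h3 := g.injective (Subtype.ext h)
        have h4 : (i : ℕ) = (j : ℕ) ∧ a = b := by
          simpa [Prod.ext_iff, Fin.ext_iff] using h3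
        simp [Fin.ext_iff, h4.1, h4.2]
      · exfalso; rw [hin i a h1, hlast j b h2] at h
        exact hnotT b (by rw [← h]; exact hmem _)
      · exfalso; rw [hlast i a h1, hin j b h2] at h
        exact hnotT a (by rw [h]; exact hmem _)
      · rw [hlast i a h1, hlast j b h2] at h
        have hij : (i : ℕ) = (j : ℕ) := by
          have hi := i.isLt; have hj := j.isLt; omega
        have hab : a = b := by
          cases a <;> cases b
          · rfl
          · exfalso; simp only [if_true, Bool.false_eq_true, if_false] at h
            exact hvz.ne h.symm
          · exfalso; simp only [if_true, Bool.false_eq_true, if_false] at h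
            exact hvz.ne h
          · rfl
        simp [Fin.ext_iff, hij, hab]
  refine ⟨⟨f, hinj⟩, ?_⟩
  rintro (_ | ⟨i, a⟩) (_ | ⟨j, b⟩) ⟨hne, hc⟩
  · exact absurd rfl hne
  · show R.Adj (f none) (f (some (j, b)))
    rw [hnone]
    by_cases h1 : (j:ℕ) < n - 1
    · rw [hin j b h1]; exact huT _ (hmem _)
    · rw [hlast j b h1]; cases b <;> simp [huv, huz]
  · show R.Adj (f (some (i, a))) (f none)
    rw [hnone]
    by_cases h1 : (i:ℕ) < n - 1
    · rw [hin i a h1]; exact (huT _ (hmem _)).symm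
    · rw [hlast i a h1]; cases a <;> simp [huv.symm, huz.symm]
  · rcases hc with h | h | ⟨k, a', b', hp, hq⟩
    · exact absurd h (by simp)
    · exact absurd h (by simp)
    · rw [Option.some.injEq, Prod.mk.injEq] at hp hq
      obtain ⟨rfl, rfl⟩ := hp
      obtain ⟨rfl, rfl⟩ := hq
      have hab : a ≠ b := fun hE => hne (by rw [hE])
      show R.Adj (f (some (j, a))) (f (some (j, b)))
      by_cases h1 : (j:ℕ) < n - 1
      · rw [hin j a h1, hin j b h1]
        refine hcl (Finset.mem_coe.mpr (hmem _)) (Finset.mem_coe.mpr (hmem _)) ?_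
        intro hE
        have := g.injective (Subtype.ext hE)
        exact hab (by simpa using this)
      · rw [hlast j a h1, hlast j b h1]
        cases a <;> cases b
        · exact absurd rfl hab
        · simpa using hvz.symm
        · simpa using hvz
        · exact absurd rfl hab

set_option synthInstance.maxSize 5000 in
set_option maxHeartbeats 1000000 in
lemma keyBool : ∀ a00 a01 a10 a11 b00 b01 b10 b11 c00 c01 c10 c11 : Bool,
    (a00 && a01) = false → (a00 && a10) = false → (a10 && a11) = false → (a01 && a11) = false → (b00 && b01) = false → (b00 && b10) = false → (b10 && b11) = false → (b01 && b11) = false → (c00 && c01) = false → (c00 && c10) = false → (c10 && c11) = false → (c01 && c11) = false → (a00 && b00 && c00) = false → (a00 || b00 || c00) = true → (a00 && b01 && c01) = false → (a00 || b01 || c01) = true → (a01 && b00 && c10) = false → (a01 || b00 || c10) = true → (a01 && b01 && c11) = false → (a01 || b01 || c11) = true → (a10 && b10 && c00) = false → (a10 || b10 || c00) = true → (a10 && b11 && c01) = false → (a10 || b11 || c01) = true → (a11 && b10 && c10) = false → (a11 || b10 || c10) = true → (a11 && b11 && c11) = false → (a11 || b11 || c11) = true → False := by decide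

lemma bAnd2 {p q : Prop} [Decidable p] [Decidable q] (h : ¬(p ∧ q)) :
    (decide p && decide q) = false := by
  by_cases hp : p
  · by_cases hq : q
    · exact absurd ⟨hp, hq⟩ h
    · simp [hq]
  · simp [hp]
lemma bAnd3 {p q r : Prop} [Decidable p] [Decidable q] [Decidable r] (h : ¬(p ∧ q ∧ r)) :
    (decide p && decide q && decide r) = false := by
  by_cases hp : p
  · by_cases hq : q
    · by_cases hr : r
      · exact absurd ⟨hp, hq, hr⟩ h
      · simp [hr]
    · simp [hq]
  · simp [hp]
lemma bOr3 {p q r : Prop} [Decidable p] [Decidable q] [Decidable r] (h : p ∨ q ∨ r) :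
    (decide p || decide q || decide r) = true := by
  rcases h with h | h | h <;> simp [h]

/-- Let `K_{6n}` carry an `(Fₙ, K₄)`-free coloring partitioned into three red
cliques `G 0, G 1, G 2` of order `2n`, and extend it by a new vertex `w` with red
neighbors `RedN` and blue neighbors `BlueN`, still `(Fₙ, K₄)`-free. Then `w` cannot
have at least `2` blue neighbors in every part. -/
theorem not_two_blue_in_every_part (n : ℕ) (hn : 4 ≤ n)
    (R : SimpleGraph (Fin (6 * n)))
    (hfree : ¬ ContainsFan R n ∧ ¬ ContainsK4 Rᶜ)
    (G : Fin 3 → Finset (Fin (6 * n)))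
    (hcard : ∀ i, (G i).card = 2 * n)
    (hdisj : ∀ i j, i ≠ j → Disjoint (G i) (G j))
    (hcover : ∀ v, ∃ i, v ∈ G i)
    (hclique : ∀ i, R.IsClique ↑(G i))
    (RedN BlueN : Finset (Fin (6 * n))) (hdisjN : Disjoint RedN BlueN)
    (hfree' : ¬ ContainsFan (extendGraph R ↑RedN) n ∧
      ¬ ContainsK4 (extendGraph Rᶜ ↑BlueN)) :
    ¬ ∀ i, 2 ≤ (BlueN ∩ G i).card := by
  intro hall
  classical
  obtain ⟨x1, hx1, x2, hx2, hx12⟩ := Finset.one_lt_card.mp (hall 0)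
  obtain ⟨y1, hy1, y2, hy2, hy12⟩ := Finset.one_lt_card.mp (hall 1)
  obtain ⟨z1, hz1, z2, hz2, hz12⟩ := Finset.one_lt_card.mp (hall 2)
  simp only [Finset.mem_inter] at hx1 hx2 hy1 hy2 hz1 hz2
  obtain ⟨hx1B, hx1G⟩ := hx1
  obtain ⟨hx2B, hx2G⟩ := hx2
  obtain ⟨hy1B, hy1G⟩ := hy1
  obtain ⟨hy2B, hy2G⟩ := hy2
  obtain ⟨hz1B, hz1G⟩ := hz1
  obtain ⟨hz2B, hz2G⟩ := hz2
  have hA : ∀ (i j : Fin 3), i ≠ j → ∀ u v v' : Fin (6 * n), u ∈ G i → v ∈ G j → v' ∈ G j →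
      v ≠ v' → R.Adj u v → R.Adj u v' → False := by
    intro i j hij u v v' hu hv hv' hvv' h1 h2
    have hcard' : 2 * (n - 1) ≤ ((G i).erase u).card := by
      rw [Finset.card_erase_of_mem hu, hcard]; omega
    obtain ⟨T, hTsub, hTcard⟩ := Finset.exists_subset_card_eq hcard'
    have hTG : ∀ t ∈ T, t ∈ G i := fun t ht => Finset.mem_of_mem_erase (hTsub ht)
    have hTu : ∀ t ∈ T, t ≠ u := fun t ht => Finset.ne_of_mem_erase (hTsub ht)
    refine hfree.1 (fanOfClique R T hTcard ?_ u v v' ?_ ?_ ?_ h1 h2 ?_)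
    · exact (hclique i).subset (fun t ht => Finset.mem_coe.mpr (hTG t (Finset.mem_coe.mp ht)))
    · intro t ht
      exact (hclique i) (Finset.mem_coe.mpr hu) (Finset.mem_coe.mpr (hTG t ht)) (hTu t ht).symm
    · intro hvT
      exact Finset.disjoint_left.mp (hdisj i j hij) (hTG v hvT) hv
    · intro hvT
      exact Finset.disjoint_left.mp (hdisj i j hij) (hTG v' hvT) hv'
    · exact (hclique j) (Finset.mem_coe.mpr hv) (Finset.mem_coe.mpr hv') hvv'
  have hB : ∀ (i j k : Fin 3), i ≠ j → i ≠ k → ∀ u v z : Fin (6 * n),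
      u ∈ G i → v ∈ G j → z ∈ G k →
      R.Adj u v → R.Adj u z → R.Adj v z → False := by
    intro i j k hij hik u v z hu hv hz h1 h2 h3
    have hcard' : 2 * (n - 1) ≤ ((G i).erase u).card := by
      rw [Finset.card_erase_of_mem hu, hcard]; omega
    obtain ⟨T, hTsub, hTcard⟩ := Finset.exists_subset_card_eq hcard'
    have hTG : ∀ t ∈ T, t ∈ G i := fun t ht => Finset.mem_of_mem_erase (hTsub ht)
    have hTu : ∀ t ∈ T, t ≠ u := fun t ht => Finset.ne_of_mem_erase (hTsub ht)
    refine hfree.1 (fanOfClique R T hTcard ?_ u v z ?_ ?_ ?_ h1 h2 h3)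
    · exact (hclique i).subset (fun t ht => Finset.mem_coe.mpr (hTG t (Finset.mem_coe.mp ht)))
    · intro t ht
      exact (hclique i) (Finset.mem_coe.mpr hu) (Finset.mem_coe.mpr (hTG t ht)) (hTu t ht).symm
    · intro hvT
      exact Finset.disjoint_left.mp (hdisj i j hij) (hTG v hvT) hv
    · intro hvT
      exact Finset.disjoint_left.mp (hdisj i k hik) (hTG z hvT) hz
  have hC : ∀ p q r : Fin (6 * n), p ∈ BlueN → q ∈ BlueN → r ∈ BlueN →
      p ≠ q → p ≠ r → q ≠ r →
      ¬R.Adj p q → ¬R.Adj p r → ¬R.Adj q r → False := by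
    intro p q r hp hq hr hpq hpr hqr npq npr nqr
    refine hfree'.2 ⟨none, some p, some q, some r, ?_, ?_, ?_, ?_, ?_, ?_⟩
    · exact Finset.mem_coe.mpr hp
    · exact Finset.mem_coe.mpr hq
    · exact Finset.mem_coe.mpr hr
    · exact ⟨hpq, npq⟩
    · exact ⟨hpr, npr⟩
    · exact ⟨hqr, nqr⟩
  have nexy : ∀ {p q : Fin (6 * n)}, p ∈ G 0 → q ∈ G 1 → p ≠ q := fun hp hq h =>
    Finset.disjoint_left.mp (hdisj 0 1 (by decide)) hp (h ▸ hq)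
  have nexz : ∀ {p q : Fin (6 * n)}, p ∈ G 0 → q ∈ G 2 → p ≠ q := fun hp hq h =>
    Finset.disjoint_left.mp (hdisj 0 2 (by decide)) hp (h ▸ hq)
  have neyz : ∀ {p q : Fin (6 * n)}, p ∈ G 1 → q ∈ G 2 → p ≠ q := fun hp hq h =>
    Finset.disjoint_left.mp (hdisj 1 2 (by decide)) hp (h ▸ hq)
  exact keyBool
    (decide (R.Adj x1 y1))
    (decide (R.Adj x1 y2))
    (decide (R.Adj x2 y1))
    (decide (R.Adj x2 y2))
    (decide (R.Adj x1 z1))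
    (decide (R.Adj x1 z2))
    (decide (R.Adj x2 z1))
    (decide (R.Adj x2 z2))
    (decide (R.Adj y1 z1))
    (decide (R.Adj y1 z2))
    (decide (R.Adj y2 z1))
    (decide (R.Adj y2 z2))
    (bAnd2 (fun hh => hA 0 1 (by decide) x1 y1 y2 hx1G hy1G hy2G hy12 hh.1 hh.2))
    (bAnd2 (fun hh => hA 1 0 (by decide) y1 x1 x2 hy1G hx1G hx2G hx12 hh.1.symm hh.2.symm))
    (bAnd2 (fun hh => hA 0 1 (by decide) x2 y1 y2 hx2G hy1G hy2G hy12 hh.1 hh.2))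
    (bAnd2 (fun hh => hA 1 0 (by decide) y2 x1 x2 hy2G hx1G hx2G hx12 hh.1.symm hh.2.symm))
    (bAnd2 (fun hh => hA 0 2 (by decide) x1 z1 z2 hx1G hz1G hz2G hz12 hh.1 hh.2))
    (bAnd2 (fun hh => hA 2 0 (by decide) z1 x1 x2 hz1G hx1G hx2G hx12 hh.1.symm hh.2.symm))
    (bAnd2 (fun hh => hA 0 2 (by decide) x2 z1 z2 hx2G hz1G hz2G hz12 hh.1 hh.2))
    (bAnd2 (fun hh => hA 2 0 (by decide) z2 x1 x2 hz2G hx1G hx2G hx12 hh.1.symm hh.2.symm))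
    (bAnd2 (fun hh => hA 1 2 (by decide) y1 z1 z2 hy1G hz1G hz2G hz12 hh.1 hh.2))
    (bAnd2 (fun hh => hA 2 1 (by decide) z1 y1 y2 hz1G hy1G hy2G hy12 hh.1.symm hh.2.symm))
    (bAnd2 (fun hh => hA 1 2 (by decide) y2 z1 z2 hy2G hz1G hz2G hz12 hh.1 hh.2))
    (bAnd2 (fun hh => hA 2 1 (by decide) z2 y1 y2 hz2G hy1G hy2G hy12 hh.1.symm hh.2.symm))
    (bAnd3 (fun hh => hB 0 1 2 (by decide) (by decide) x1 y1 z1 hx1G hy1G hz1G hh.1 hh.2.1 hh.2.2))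
    (bOr3 (by by_contra hcon; push_neg at hcon; exact hC x1 y1 z1 hx1B hy1B hz1B (nexy hx1G hy1G) (nexz hx1G hz1G) (neyz hy1G hz1G) hcon.1 hcon.2.1 hcon.2.2))
    (bAnd3 (fun hh => hB 0 1 2 (by decide) (by decide) x1 y1 z2 hx1G hy1G hz2G hh.1 hh.2.1 hh.2.2))
    (bOr3 (by by_contra hcon; push_neg at hcon; exact hC x1 y1 z2 hx1B hy1B hz2B (nexy hx1G hy1G) (nexz hx1G hz2G) (neyz hy1G hz2G) hcon.1 hcon.2.1 hcon.2.2))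
    (bAnd3 (fun hh => hB 0 1 2 (by decide) (by decide) x1 y2 z1 hx1G hy2G hz1G hh.1 hh.2.1 hh.2.2))
    (bOr3 (by by_contra hcon; push_neg at hcon; exact hC x1 y2 z1 hx1B hy2B hz1B (nexy hx1G hy2G) (nexz hx1G hz1G) (neyz hy2G hz1G) hcon.1 hcon.2.1 hcon.2.2))
    (bAnd3 (fun hh => hB 0 1 2 (by decide) (by decide) x1 y2 z2 hx1G hy2G hz2G hh.1 hh.2.1 hh.2.2))
    (bOr3 (by by_contra hcon; push_neg at hcon; exact hC x1 y2 z2 hx1B hy2B hz2B (nexy hx1G hy2G) (nexz hx1G hz2G) (neyz hy2G hz2G) hcon.1 hcon.2.1 hcon.2.2))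
    (bAnd3 (fun hh => hB 0 1 2 (by decide) (by decide) x2 y1 z1 hx2G hy1G hz1G hh.1 hh.2.1 hh.2.2))
    (bOr3 (by by_contra hcon; push_neg at hcon; exact hC x2 y1 z1 hx2B hy1B hz1B (nexy hx2G hy1G) (nexz hx2G hz1G) (neyz hy1G hz1G) hcon.1 hcon.2.1 hcon.2.2))
    (bAnd3 (fun hh => hB 0 1 2 (by decide) (by decide) x2 y1 z2 hx2G hy1G hz2G hh.1 hh.2.1 hh.2.2))
    (bOr3 (by by_contra hcon; push_neg at hcon; exact hC x2 y1 z2 hx2B hy1B hz2B (nexy hx2G hy1G) (nexz hx2G hz2G) (neyz hy1G hz2G) hcon.1 hcon.2.1 hcon.2.2))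
    (bAnd3 (fun hh => hB 0 1 2 (by decide) (by decide) x2 y2 z1 hx2G hy2G hz1G hh.1 hh.2.1 hh.2.2))
    (bOr3 (by by_contra hcon; push_neg at hcon; exact hC x2 y2 z1 hx2B hy2B hz1B (nexy hx2G hy2G) (nexz hx2G hz1G) (neyz hy2G hz1G) hcon.1 hcon.2.1 hcon.2.2))
    (bAnd3 (fun hh => hB 0 1 2 (by decide) (by decide) x2 y2 z2 hx2G hy2G hz2G hh.1 hh.2.1 hh.2.2))
    (bOr3 (by by_contra hcon; push_neg at hcon; exact hC x2 y2 z2 hx2B hy2B hz2B (nexy hx2G hy2G) (nexz hx2G hz2G) (neyz hy2G hz2G) hcon.1 hcon.2.1 hcon.2.2))
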